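/- Let A(n) be invertible d×d matrices, uniformly bounded with uniformly bounded inverses, and suppose Σ(A)=⋃_{i=1}^{ℓ}[a_i,b_i] with 0<a_1≤b_1<⋯<a_ℓ≤b_ℓ (ℓ≤d disjoint spectral intervals). If λ∈(b_{ℓ-1},a_ℓ) so that x(n+1)=λ^{-1}A(n)x(n) has an exponential dichotomy with projector P_λ of rank m<d, and this system is kinematically similar to a block-diagonal system diag(A_1(n),A_2(n)) with A_1 of size m×m having dichotomy with projector I and A_2 of size (d−m)×(d−m) having dichotomy with projector 0, then Σ(λA_1)=⋃_{i=1}^{ℓ-1}[a_i,b_i] and Σ(λA_2)=[a_ℓ,b_ℓ]. -/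

import Mathlib

open scoped Matrix
attribute [local instance] Matrix.linftyOpNormedRing

variable {d : ℕ}

noncomputable def fund (A : ℤ → Matrix (Fin d) (Fin d) ℝ) (n : ℤ) : Matrix (Fin d) (Fin d) ℝ :=
  if 0 ≤ n then ((List.range n.toNat).map (fun j => A (n - 1 - (j : ℤ)))).prod
  else ((List.range (-n).toNat).map (fun j => (A (n + (j : ℤ)))⁻¹)).prod

def ExpDich (A : ℤ → Matrix (Fin d) (Fin d) ℝ) : Prop :=
  ∃ K ρ : ℝ, 1 ≤ K ∧ ρ ∈ Set.Ioo (0:ℝ) 1 ∧ ∃ P : Matrix (Fin d) (Fin d) ℝ, P * P = P ∧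
    (∀ n k : ℤ, k ≤ n → ‖fund A n * P * (fund A k)⁻¹‖ ≤ K * ρ ^ (n - k)) ∧
    (∀ n k : ℤ, n ≤ k → ‖fund A n * (1 - P) * (fund A k)⁻¹‖ ≤ K * ρ ^ (k - n))

def KinSim (A B : ℤ → Matrix (Fin d) (Fin d) ℝ) : Prop :=
  ∃ F : ℤ → Matrix (Fin d) (Fin d) ℝ, (∀ n, IsUnit (F n)) ∧
    (∃ M : ℝ, ∀ n, ‖F n‖ ≤ M) ∧ (∃ M : ℝ, ∀ n, ‖(F n)⁻¹‖ ≤ M) ∧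
    ∀ n, F (n + 1) * B n = A n * F n

def SSpec (A : ℤ → Matrix (Fin d) (Fin d) ℝ) : Set ℝ :=
  {l | 0 < l ∧ ¬ ExpDich (fun n => l⁻¹ • A n)}
def ExpDichWith (A : ℤ → Matrix (Fin d) (Fin d) ℝ) (P : Matrix (Fin d) (Fin d) ℝ) : Prop :=
  P * P = P ∧ ∃ K ρ : ℝ, 1 ≤ K ∧ ρ ∈ Set.Ioo (0:ℝ) 1 ∧
    (∀ n k : ℤ, k ≤ n → ‖fund A n * P * (fund A k)⁻¹‖ ≤ K * ρ ^ (n - k)) ∧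
    (∀ n k : ℤ, n ≤ k → ‖fund A n * (1 - P) * (fund A k)⁻¹‖ ≤ K * ρ ^ (k - n))


section fundBasic

variable {p : ℕ} (A : ℤ → Matrix (Fin p) (Fin p) ℝ)

lemma fund_eq (n : ℤ) : fund A n =
    if 0 ≤ n then ((List.range n.toNat).map (fun j : ℕ => A (n - 1 - (j : ℤ)))).prod
    else ((List.range (-n).toNat).map (fun j : ℕ => (A (n + (j : ℤ)))⁻¹)).prod := by
  simp only [fund, bind_pure_comp, List.map_eq_map, List.map_map]
  rfl

lemma fund_zero : fund A 0 = 1 := by simp [fund_eq]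

lemma matrix_inv_mul {M : Matrix (Fin p) (Fin p) ℝ} (h : IsUnit M) : M⁻¹ * M = 1 :=
  Matrix.nonsing_inv_mul M ((Matrix.isUnit_iff_isUnit_det M).mp h)

lemma matrix_mul_inv {M : Matrix (Fin p) (Fin p) ℝ} (h : IsUnit M) : M * M⁻¹ = 1 :=
  Matrix.mul_nonsing_inv M ((Matrix.isUnit_iff_isUnit_det M).mp h)

lemma isUnit_matrix_inv {M : Matrix (Fin p) (Fin p) ℝ} (h : IsUnit M) : IsUnit M⁻¹ :=
  ⟨⟨M⁻¹, M, matrix_inv_mul h, matrix_mul_inv h⟩, rfl⟩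

lemma fund_succ (hA : ∀ n, IsUnit (A n)) (n : ℤ) : fund A (n + 1) = A n * fund A n := by
  rcases le_or_gt 0 n with hn | hn
  · have h1 : (0:ℤ) ≤ n + 1 := by omega
    have ht : (n+1).toNat = n.toNat + 1 := by omega
    rw [fund_eq, fund_eq, if_pos h1, if_pos hn, ht, List.range_succ_eq_map,
      List.map_cons, List.map_map, List.prod_cons]
    rw [show ((fun j : ℕ => A (n + 1 - 1 - (j:ℤ))) ∘ Nat.succ) = (fun j : ℕ => A (n - 1 - (j:ℤ)))
      from funext fun j => by
        simp only [Function.comp_apply]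
        rw [show n + 1 - 1 - ((Nat.succ j : ℕ) : ℤ) = n - 1 - (j:ℤ) by push_cast [Nat.succ_eq_add_one]; ring]]
    rw [show n + 1 - 1 - ((0:ℕ):ℤ) = n by push_cast; ring]
  · have h2 : ¬ (0:ℤ) ≤ n := by omega
    have hstep : fund A n = (A n)⁻¹ * fund A (n+1) := by
      rcases eq_or_lt_of_le (show n + 1 ≤ 0 by omega) with h3 | h3
      · have hn1 : n = -1 := by omega
        subst hn1
        simp [fund_eq, List.range_succ]
      · have ht : (-n).toNat = (-(n+1)).toNat + 1 := by omega
        rw [fund_eq, fund_eq, if_neg h2, if_neg (by omega), ht, List.range_succ_eq_map,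
          List.map_cons, List.map_map, List.prod_cons]
        rw [show ((fun j : ℕ => (A (n + (j:ℤ)))⁻¹) ∘ Nat.succ)
            = (fun j : ℕ => (A (n + 1 + (j:ℤ)))⁻¹)
          from funext fun j => by
            simp only [Function.comp_apply]
            rw [show n + ((Nat.succ j : ℕ) : ℤ) = n + 1 + (j:ℤ) by push_cast [Nat.succ_eq_add_one]; ring]]
        rw [show n + ((0:ℕ):ℤ) = n by push_cast; ring]
    rw [hstep, ← mul_assoc, matrix_mul_inv (hA n), one_mul]

lemma fund_pred (hA : ∀ n, IsUnit (A n)) (n : ℤ) :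
    fund A n = (A n)⁻¹ * fund A (n + 1) := by
  rw [fund_succ A hA n, ← mul_assoc, matrix_inv_mul (hA n), one_mul]

lemma isUnit_fund (hA : ∀ n, IsUnit (A n)) (n : ℤ) : IsUnit (fund A n) := by
  induction n using Int.induction_on with
  | zero => rw [fund_zero]; exact isUnit_one
  | succ k ih => rw [fund_succ A hA]; exact (hA k).mul ih
  | pred k ih =>
    have e : -(k:ℤ) - 1 = -((k:ℤ)+1) := by ring
    rw [e, fund_pred A hA]
    have e2 : -((k:ℤ)+1) + 1 = -(k:ℤ) := by ring
    rw [e2]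
    exact (isUnit_matrix_inv (hA _)).mul ih

lemma fund_unique (hA : ∀ n, IsUnit (A n)) (G : ℤ → Matrix (Fin p) (Fin p) ℝ)
    (hG0 : G 0 = 1) (hGs : ∀ n : ℤ, G (n + 1) = A n * G n) : ∀ n, G n = fund A n := by
  intro n
  induction n using Int.induction_on with
  | zero => rw [hG0, fund_zero]
  | succ k ih => rw [hGs, fund_succ A hA, ih]
  | pred k ih =>
    have e : -(k:ℤ) - 1 = -((k:ℤ)+1) := by ring
    have e2 : -((k:ℤ)+1) + 1 = -(k:ℤ) := by ring
    have h1 := hGs (-((k:ℤ)+1))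
    rw [e2] at h1
    have hinv := matrix_inv_mul (hA (-((k:ℤ)+1)))
    rw [e, fund_pred A hA, e2, ← ih, h1, ← mul_assoc, hinv, one_mul]

end fundBasic

section helpers

attribute [local instance] Matrix.linftyOpNormedAlgebra

variable {p q r : ℕ}

lemma isUnit_smul_matrix {c : ℝ} (hc : c ≠ 0) {M : Matrix (Fin p) (Fin p) ℝ}
    (h : IsUnit M) : IsUnit (c • M) := by
  rw [Matrix.isUnit_iff_isUnit_det, Matrix.det_smul]
  exact (hc.isUnit.pow _).mul ((Matrix.isUnit_iff_isUnit_det M).mp h)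

lemma smul_matrix_inv {c : ℝ} (hc : c ≠ 0) {M : Matrix (Fin p) (Fin p) ℝ} (h : IsUnit M) :
    (c • M)⁻¹ = c⁻¹ • M⁻¹ := by
  apply Matrix.inv_eq_left_inv
  rw [smul_mul_assoc, mul_smul_comm, smul_smul, inv_mul_cancel₀ hc, one_smul,
    matrix_inv_mul h]

lemma fund_smul (A : ℤ → Matrix (Fin p) (Fin p) ℝ) (hA : ∀ n, IsUnit (A n)) {c : ℝ}
    (hc : c ≠ 0) (n : ℤ) :
    fund (fun k => c • A k) n = c ^ n • fund A n := by
  refine (fund_unique _ (fun k => isUnit_smul_matrix hc (hA k))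
    (fun k => c ^ k • fund A k) ?_ ?_ n).symm
  · show c ^ (0:ℤ) • fund A 0 = 1
    rw [zpow_zero, one_smul, fund_zero]
  · intro k
    show c ^ (k+1) • fund A (k+1) = (c • A k) * (c ^ k • fund A k)
    rw [fund_succ A hA, zpow_add_one₀ hc, smul_mul_assoc, mul_smul_comm, smul_smul,
      mul_comm c (c ^ k)]

lemma isUnit_fromBlocks_diag {B1 : Matrix (Fin p) (Fin p) ℝ} {B2 : Matrix (Fin q) (Fin q) ℝ}
    (h1 : IsUnit B1) (h2 : IsUnit B2) : IsUnit (Matrix.fromBlocks B1 0 0 B2) := by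
  rw [Matrix.isUnit_iff_isUnit_det, Matrix.det_fromBlocks_zero₂₁]
  exact ((Matrix.isUnit_iff_isUnit_det B1).mp h1).mul ((Matrix.isUnit_iff_isUnit_det B2).mp h2)

lemma isUnit_submatrix_equiv {S : Type*} [Fintype S] [DecidableEq S] (e : Fin p ≃ S)
    {M : Matrix S S ℝ} (h : IsUnit M) : IsUnit (M.submatrix e e) := by
  rw [Matrix.isUnit_iff_isUnit_det, Matrix.det_submatrix_equiv_self]
  exact (Matrix.isUnit_iff_isUnit_det M).mp h

lemma submatrix_equiv_inv {S : Type*} [Fintype S] [DecidableEq S] (e : Fin p ≃ S)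
    {M : Matrix S S ℝ} (h : IsUnit M) : (M.submatrix e e)⁻¹ = M⁻¹.submatrix e e := by
  apply Matrix.inv_eq_left_inv
  rw [Matrix.submatrix_mul_equiv, Matrix.nonsing_inv_mul M ((Matrix.isUnit_iff_isUnit_det M).mp h),
    Matrix.submatrix_one_equiv]

lemma fromBlocks_diag_inv {B1 : Matrix (Fin p) (Fin p) ℝ} {B2 : Matrix (Fin q) (Fin q) ℝ}
    (h1 : IsUnit B1) (h2 : IsUnit B2) :
    (Matrix.fromBlocks B1 0 0 B2)⁻¹ = Matrix.fromBlocks B1⁻¹ 0 0 B2⁻¹ := by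
  apply Matrix.inv_eq_left_inv
  rw [Matrix.fromBlocks_multiply]
  simp [matrix_inv_mul h1, matrix_inv_mul h2, Matrix.fromBlocks_one]

lemma fund_blocks (e : Fin p ≃ Fin q ⊕ Fin r)
    (B1 : ℤ → Matrix (Fin q) (Fin q) ℝ) (B2 : ℤ → Matrix (Fin r) (Fin r) ℝ)
    (h1 : ∀ n, IsUnit (B1 n)) (h2 : ∀ n, IsUnit (B2 n)) (n : ℤ) :
    fund (fun k => (Matrix.fromBlocks (B1 k) 0 0 (B2 k)).submatrix e e) n
      = (Matrix.fromBlocks (fund B1 n) 0 0 (fund B2 n)).submatrix e e := by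
  refine (fund_unique _
    (fun k => isUnit_submatrix_equiv e (isUnit_fromBlocks_diag (h1 k) (h2 k)))
    (fun k => (Matrix.fromBlocks (fund B1 k) 0 0 (fund B2 k)).submatrix e e) ?_ ?_ n).symm
  · show (Matrix.fromBlocks (fund B1 0) 0 0 (fund B2 0)).submatrix e e = 1
    rw [fund_zero, fund_zero, Matrix.fromBlocks_one, Matrix.submatrix_one_equiv]
  · intro k
    show (Matrix.fromBlocks (fund B1 (k+1)) 0 0 (fund B2 (k+1))).submatrix e e
      = (Matrix.fromBlocks (B1 k) 0 0 (B2 k)).submatrix e e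
        * (Matrix.fromBlocks (fund B1 k) 0 0 (fund B2 k)).submatrix e e
    rw [Matrix.submatrix_mul_equiv, Matrix.fromBlocks_multiply]
    simp [fund_succ B1 h1, fund_succ B2 h2]

end helpers

section norms

attribute [local instance] Matrix.linftyOpNormedAlgebra

lemma matrix_norm_smul {p : ℕ} (c : ℝ) (M : Matrix (Fin p) (Fin p) ℝ) :
    ‖c • M‖ = |c| * ‖M‖ := by
  rw [norm_smul, Real.norm_eq_abs]

lemma nnnorm_submatrix_equiv {p : ℕ} {S : Type*} [Fintype S] [DecidableEq S]
    (e : Fin p ≃ S) (M : Matrix S S ℝ) : ‖M.submatrix e e‖₊ = ‖M‖₊ := by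
  rw [Matrix.linfty_opNNNorm_def, Matrix.linfty_opNNNorm_def]
  apply le_antisymm
  · apply Finset.sup_le
    intro i _
    rw [show (∑ j, ‖M.submatrix e e i j‖₊) = ∑ j, ‖M (e i) j‖₊ from
      Equiv.sum_comp e (fun j => ‖M (e i) j‖₊)]
    exact Finset.le_sup (f := fun i => ∑ j, ‖M i j‖₊) (Finset.mem_univ (e i))
  · apply Finset.sup_le
    intro i _
    refine le_trans (le_of_eq ?_) (Finset.le_sup (f := fun i => ∑ j, ‖M.submatrix e e i j‖₊) (Finset.mem_univ (e.symm i)))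
    beta_reduce
    rw [show (∑ j, ‖M.submatrix e e (e.symm i) j‖₊) = ∑ j, ‖M (e (e.symm i)) (e j)‖₊ from rfl]
    rw [e.apply_symm_apply]
    exact (Equiv.sum_comp e (fun j => ‖M i j‖₊)).symm

lemma norm_submatrix_equiv {p : ℕ} {S : Type*} [Fintype S] [DecidableEq S]
    (e : Fin p ≃ S) (M : Matrix S S ℝ) : ‖M.submatrix e e‖ = ‖M‖ := by
  rw [← coe_nnnorm, ← coe_nnnorm, nnnorm_submatrix_equiv]

variable {α γ : Type*} [Fintype α] [Fintype γ] [DecidableEq α] [DecidableEq γ]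

lemma nnnorm_blocks_left (X : Matrix α α ℝ) (B : Matrix α γ ℝ) (C : Matrix γ α ℝ)
    (Y : Matrix γ γ ℝ) : ‖X‖₊ ≤ ‖Matrix.fromBlocks X B C Y‖₊ := by
  rw [Matrix.linfty_opNNNorm_def, Matrix.linfty_opNNNorm_def]
  apply Finset.sup_le
  intro i _
  refine le_trans ?_ (Finset.le_sup (f := fun i => ∑ j, ‖Matrix.fromBlocks X B C Y i j‖₊) (Finset.mem_univ (Sum.inl i)))
  beta_reduce
  rw [Fintype.sum_sum_type]
  simp only [Matrix.fromBlocks_apply₁₁, Matrix.fromBlocks_apply₁₂]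
  exact le_self_add

lemma nnnorm_blocks_right (X : Matrix α α ℝ) (B : Matrix α γ ℝ) (C : Matrix γ α ℝ)
    (Y : Matrix γ γ ℝ) : ‖Y‖₊ ≤ ‖Matrix.fromBlocks X B C Y‖₊ := by
  rw [Matrix.linfty_opNNNorm_def, Matrix.linfty_opNNNorm_def]
  apply Finset.sup_le
  intro i _
  refine le_trans ?_ (Finset.le_sup (f := fun i => ∑ j, ‖Matrix.fromBlocks X B C Y i j‖₊) (Finset.mem_univ (Sum.inr i)))
  beta_reduce
  rw [Fintype.sum_sum_type]
  simp only [Matrix.fromBlocks_apply₂₁, Matrix.fromBlocks_apply₂₂]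
  exact le_add_self

lemma nnnorm_blocks_diag_le (X : Matrix α α ℝ) (Y : Matrix γ γ ℝ) :
    ‖Matrix.fromBlocks X 0 0 Y‖₊ ≤ max ‖X‖₊ ‖Y‖₊ := by
  rw [Matrix.linfty_opNNNorm_def]
  apply Finset.sup_le
  rintro (i | i) _
  · refine le_trans ?_ (le_max_of_le_left (le_refl ‖X‖₊))
    rw [Matrix.linfty_opNNNorm_def, Fintype.sum_sum_type]
    simp only [Matrix.fromBlocks_apply₁₁, Matrix.fromBlocks_apply₁₂, Matrix.zero_apply,
      nnnorm_zero, Finset.sum_const_zero, add_zero]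
    exact Finset.le_sup (f := fun i => ∑ j, ‖X i j‖₊) (Finset.mem_univ i)
  · refine le_trans ?_ (le_max_of_le_right (le_refl ‖Y‖₊))
    rw [Matrix.linfty_opNNNorm_def, Fintype.sum_sum_type]
    simp only [Matrix.fromBlocks_apply₂₁, Matrix.fromBlocks_apply₂₂, Matrix.zero_apply,
      nnnorm_zero, Finset.sum_const_zero, zero_add]
    exact Finset.le_sup (f := fun i => ∑ j, ‖Y i j‖₊) (Finset.mem_univ i)

lemma norm_blocks_left (X : Matrix α α ℝ) (B : Matrix α γ ℝ) (C : Matrix γ α ℝ)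
    (Y : Matrix γ γ ℝ) : ‖X‖ ≤ ‖Matrix.fromBlocks X B C Y‖ :=
  nnnorm_blocks_left X B C Y

lemma norm_blocks_right (X : Matrix α α ℝ) (B : Matrix α γ ℝ) (C : Matrix γ α ℝ)
    (Y : Matrix γ γ ℝ) : ‖Y‖ ≤ ‖Matrix.fromBlocks X B C Y‖ :=
  nnnorm_blocks_right X B C Y

lemma norm_blocks_diag_le (X : Matrix α α ℝ) (Y : Matrix γ γ ℝ) :
    ‖Matrix.fromBlocks X 0 0 Y‖ ≤ max ‖X‖ ‖Y‖ := by
  have := nnnorm_blocks_diag_le X Y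
  have h2 : ((max ‖X‖₊ ‖Y‖₊ : NNReal) : ℝ) = max ‖X‖ ‖Y‖ := by
    simp [NNReal.coe_max]
  calc ‖Matrix.fromBlocks X 0 0 Y‖ = ((‖Matrix.fromBlocks X 0 0 Y‖₊ : NNReal) : ℝ) := rfl
    _ ≤ ((max ‖X‖₊ ‖Y‖₊ : NNReal) : ℝ) := by exact_mod_cast this
    _ = max ‖X‖ ‖Y‖ := h2

end norms

section zpowHelpers

lemma zpow_le_zpow_base {x y : ℝ} (hx : 0 < x) (hxy : x ≤ y) {z : ℤ} (hz : 0 ≤ z) :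
    x ^ z ≤ y ^ z := by
  lift z to ℕ using hz
  rw [zpow_natCast, zpow_natCast]
  exact pow_le_pow_left₀ hx.le hxy z

lemma zpow_le_one_of_le_one {c : ℝ} (hc : 0 < c) (hc1 : c ≤ 1) {z : ℤ} (hz : 0 ≤ z) :
    c ^ z ≤ 1 := by
  lift z to ℕ using hz
  rw [zpow_natCast]
  exact pow_le_one₀ hc.le hc1

lemma le_zero_of_le_geom {c K r : ℝ} (hK : 0 ≤ K) (hr0 : 0 ≤ r) (hr1 : r < 1)
    (h : ∀ n : ℕ, c ≤ K * r ^ n) : c ≤ 0 := by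
  by_contra hc
  push_neg at hc
  rcases eq_or_lt_of_le hK with hK0 | hK0
  · have := h 0
    rw [← hK0] at this
    simp at this
    linarith
  · obtain ⟨n, hn⟩ := exists_pow_lt_of_lt_one (div_pos hc hK0) hr1
    have := h n
    have h2 : K * r ^ n < K * (c / K) := by
      exact mul_lt_mul_of_pos_left hn hK0
    rw [mul_div_cancel₀ c hK0.ne'] at h2
    linarith

lemma matrix_eq_zero_of_norm_le_geom {p : ℕ} {M : Matrix (Fin p) (Fin p) ℝ} {K r : ℝ}
    (hK : 0 ≤ K) (hr0 : 0 ≤ r) (hr1 : r < 1) (h : ∀ n : ℕ, ‖M‖ ≤ K * r ^ n) : M = 0 := by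
  have := le_zero_of_le_geom hK hr0 hr1 h
  exact norm_le_zero_iff.mp this

end zpowHelpers

section dichotomy

variable {p q r : ℕ}

lemma fund_scaled_triple (B : ℤ → Matrix (Fin p) (Fin p) ℝ) (hB : ∀ n, IsUnit (B n))
    {ν : ℝ} (hν : 0 < ν) (Q : Matrix (Fin p) (Fin p) ℝ) (n k : ℤ) :
    fund (fun j => ν⁻¹ • B j) n * Q * (fund (fun j => ν⁻¹ • B j) k)⁻¹
      = (ν⁻¹) ^ (n - k) • (fund B n * Q * (fund B k)⁻¹) := by
  have hc : (ν⁻¹ : ℝ) ≠ 0 := inv_ne_zero hν.ne'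
  rw [fund_smul B hB hc n, fund_smul B hB hc k,
    smul_matrix_inv (zpow_ne_zero _ hc) (isUnit_fund B hB k),
    smul_mul_assoc, smul_mul_assoc, mul_smul_comm, smul_smul, ← zpow_neg, ← zpow_add₀ hc]
  rw [show n + -k = n - k by omega]

lemma norm_fund_scaled_triple (B : ℤ → Matrix (Fin p) (Fin p) ℝ) (hB : ∀ n, IsUnit (B n))
    {ν : ℝ} (hν : 0 < ν) (Q : Matrix (Fin p) (Fin p) ℝ) (n k : ℤ) :
    ‖fund (fun j => ν⁻¹ • B j) n * Q * (fund (fun j => ν⁻¹ • B j) k)⁻¹‖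
      = (ν⁻¹) ^ (n - k) * ‖fund B n * Q * (fund B k)⁻¹‖ := by
  rw [fund_scaled_triple B hB hν Q n k, matrix_norm_smul,
    abs_of_pos (zpow_pos (inv_pos.mpr hν) _)]

/-- Persistence above the spectrum for a system with projector 1. -/
lemma expDich_scale_of_proj_one (B : ℤ → Matrix (Fin p) (Fin p) ℝ) (hB : ∀ n, IsUnit (B n))
    (h : ExpDichWith B 1) {ν : ℝ} (hν : 1 ≤ ν) :
    ExpDichWith (fun j => ν⁻¹ • B j) 1 := by
  have hν0 : 0 < ν := lt_of_lt_of_le one_pos hν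
  obtain ⟨-, K, ρ, hK, hρ, h1, h2⟩ := h
  refine ⟨by rw [mul_one], K, ρ, hK, hρ, ?_, ?_⟩
  · intro n k hkn
    rw [norm_fund_scaled_triple B hB hν0 1 n k]
    have hb : (ν⁻¹) ^ (n - k) ≤ 1 :=
      zpow_le_one_of_le_one (inv_pos.mpr hν0) (inv_le_one_of_one_le₀ hν) (by omega)
    have hrhs : 0 ≤ K * ρ ^ (n - k) :=
      mul_nonneg (le_trans zero_le_one hK) (zpow_pos hρ.1 _).le
    calc (ν⁻¹) ^ (n - k) * ‖fund B n * 1 * (fund B k)⁻¹‖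
        ≤ 1 * (K * ρ ^ (n - k)) := by
          apply mul_le_mul hb (h1 n k hkn) (norm_nonneg _) zero_le_one
      _ = K * ρ ^ (n - k) := one_mul _
  · intro n k hnk
    have : (1 : Matrix (Fin p) (Fin p) ℝ) - 1 = 0 := sub_self 1
    rw [this, Matrix.mul_zero, Matrix.zero_mul, norm_zero]
    exact mul_nonneg (le_trans zero_le_one hK) (zpow_pos hρ.1 _).le

/-- Persistence below the spectrum for a system with projector 0. -/
lemma expDich_scale_of_proj_zero (B : ℤ → Matrix (Fin p) (Fin p) ℝ) (hB : ∀ n, IsUnit (B n))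
    (h : ExpDichWith B 0) {ν : ℝ} (hν0 : 0 < ν) (hν : ν ≤ 1) :
    ExpDichWith (fun j => ν⁻¹ • B j) 0 := by
  obtain ⟨-, K, ρ, hK, hρ, h1, h2⟩ := h
  refine ⟨by rw [mul_zero], K, ρ, hK, hρ, ?_, ?_⟩
  · intro n k hkn
    rw [Matrix.mul_zero, Matrix.zero_mul, norm_zero]
    exact mul_nonneg (le_trans zero_le_one hK) (zpow_pos hρ.1 _).le
  · intro n k hnk
    rw [norm_fund_scaled_triple B hB hν0 _ n k]
    have hb : (ν⁻¹) ^ (n - k) ≤ 1 := by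
      rw [show (ν⁻¹ : ℝ) ^ (n - k) = ν ^ (k - n) by
        rw [inv_zpow, ← zpow_neg]; congr 1; omega]
      exact zpow_le_one_of_le_one hν0 hν (by omega)
    have hrhs : 0 ≤ K * ρ ^ (k - n) :=
      mul_nonneg (le_trans zero_le_one hK) (zpow_pos hρ.1 _).le
    calc (ν⁻¹) ^ (n - k) * ‖fund B n * (1 - 0) * (fund B k)⁻¹‖
        ≤ 1 * (K * ρ ^ (k - n)) := by
          apply mul_le_mul hb (h2 n k hnk) (norm_nonneg _) zero_le_one
      _ = K * ρ ^ (k - n) := one_mul _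

end dichotomy
section kinsim

variable {p : ℕ}

lemma kinSim_fund {A B : ℤ → Matrix (Fin p) (Fin p) ℝ} (hB : ∀ n, IsUnit (B n))
    (F : ℤ → Matrix (Fin p) (Fin p) ℝ) (hF : ∀ n, IsUnit (F n))
    (hrel : ∀ n, F (n + 1) * B n = A n * F n) (hA : ∀ n, IsUnit (A n)) (n : ℤ) :
    fund A n = F n * fund B n * (F 0)⁻¹ := by
  refine (fund_unique A hA (fun k => F k * fund B k * (F 0)⁻¹) ?_ ?_ n).symm
  · show F 0 * fund B 0 * (F 0)⁻¹ = 1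
    rw [fund_zero, Matrix.mul_one, matrix_mul_inv (hF 0)]
  · intro k
    show F (k+1) * fund B (k+1) * (F 0)⁻¹ = A k * (F k * fund B k * (F 0)⁻¹)
    rw [fund_succ B hB, ← Matrix.mul_assoc, ← Matrix.mul_assoc, hrel k,
      Matrix.mul_assoc (A k), ← Matrix.mul_assoc, Matrix.mul_assoc]

lemma kinSim_units {A B : ℤ → Matrix (Fin p) (Fin p) ℝ} (hA : ∀ n, IsUnit (A n))
    (F : ℤ → Matrix (Fin p) (Fin p) ℝ) (hF : ∀ n, IsUnit (F n))
    (hrel : ∀ n, F (n + 1) * B n = A n * F n) : ∀ n, IsUnit (B n) := by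
  intro n
  have : B n = (F (n+1))⁻¹ * (A n * F n) := by
    rw [← hrel n, ← Matrix.mul_assoc, matrix_inv_mul (hF (n+1)), Matrix.one_mul]
  rw [this]
  exact (isUnit_matrix_inv (hF (n+1))).mul ((hA n).mul (hF n))

lemma kinSim_symm {A B : ℤ → Matrix (Fin p) (Fin p) ℝ} (hsim : KinSim A B) : KinSim B A := by
  obtain ⟨F, hF, ⟨M1, hM1⟩, ⟨M2, hM2⟩, hrel⟩ := hsim
  refine ⟨fun n => (F n)⁻¹, fun n => isUnit_matrix_inv (hF n), ⟨M2, fun n => hM2 n⟩,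
    ⟨M1, fun n => ?_⟩, fun n => ?_⟩
  · rw [Matrix.nonsing_inv_nonsing_inv _ ((Matrix.isUnit_iff_isUnit_det _).mp (hF n))]
    exact hM1 n
  · -- (F (n+1))⁻¹ * A n = B n * (F n)⁻¹
    have h := hrel n
    have : F (n+1) * (B n * (F n)⁻¹) = F (n+1) * ((F (n+1))⁻¹ * A n) := by
      rw [← Matrix.mul_assoc, h, Matrix.mul_assoc, matrix_mul_inv (hF n), Matrix.mul_one,
        ← Matrix.mul_assoc, matrix_mul_inv (hF (n+1)), Matrix.one_mul]
    have h2 := congrArg (fun X => (F (n+1))⁻¹ * X) this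
    simpa [← Matrix.mul_assoc, matrix_inv_mul (hF (n+1))] using h2.symm

lemma kinSim_expDich {A B : ℤ → Matrix (Fin p) (Fin p) ℝ} (hA : ∀ n, IsUnit (A n))
    (hsim : KinSim A B) (hED : ExpDich B) : ExpDich A := by
  obtain ⟨F, hF, ⟨M1, hM1⟩, ⟨M2, hM2⟩, hrel⟩ := hsim
  have hB := kinSim_units hA F hF hrel
  obtain ⟨K, ρ, hK, hρ, Q, hQ, h1, h2⟩ := hED
  have hM1' : 0 ≤ M1 := le_trans (norm_nonneg _) (hM1 0)
  have hM2' : 0 ≤ M2 := le_trans (norm_nonneg _) (hM2 0)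
  set K' := max 1 (M1 * M2 * K) with hK'
  have hfund : ∀ n, fund A n = F n * fund B n * (F 0)⁻¹ := kinSim_fund hB F hF hrel hA
  have key : ∀ (R : Matrix (Fin p) (Fin p) ℝ) (n k : ℤ),
      fund A n * (F 0 * R * (F 0)⁻¹) * (fund A k)⁻¹
        = F n * (fund B n * R * (fund B k)⁻¹) * (F k)⁻¹ := by
    intro R n k
    rw [hfund n, hfund k]
    rw [Matrix.mul_inv_rev, Matrix.mul_inv_rev,
      Matrix.nonsing_inv_nonsing_inv _ ((Matrix.isUnit_iff_isUnit_det _).mp (hF 0))]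
    have hc1 : (F 0)⁻¹ * (F 0) = 1 := matrix_inv_mul (hF 0)
    -- rearrange
    calc F n * fund B n * (F 0)⁻¹ * (F 0 * R * (F 0)⁻¹) * (F 0 * ((fund B k)⁻¹ * (F k)⁻¹))
        = F n * fund B n * (((F 0)⁻¹ * F 0) * R * ((F 0)⁻¹ * F 0)) * ((fund B k)⁻¹ * (F k)⁻¹) := by
          simp only [Matrix.mul_assoc]
      _ = F n * (fund B n * R * (fund B k)⁻¹) * (F k)⁻¹ := by
          rw [hc1]
          simp only [Matrix.one_mul, Matrix.mul_one, Matrix.mul_assoc]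
  have keybound : ∀ (R : Matrix (Fin p) (Fin p) ℝ) (n k : ℤ) (z : ℤ),
      ‖fund B n * R * (fund B k)⁻¹‖ ≤ K * ρ ^ z →
      ‖fund A n * (F 0 * R * (F 0)⁻¹) * (fund A k)⁻¹‖ ≤ K' * ρ ^ z := by
    intro R n k z hb
    rw [key R n k]
    have e1 : ‖F n * (fund B n * R * (fund B k)⁻¹) * (F k)⁻¹‖
        ≤ M1 * (K * ρ ^ z) * M2 := by
      calc ‖F n * (fund B n * R * (fund B k)⁻¹) * (F k)⁻¹‖
          ≤ ‖F n * (fund B n * R * (fund B k)⁻¹)‖ * ‖(F k)⁻¹‖ := norm_mul_le _ _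
        _ ≤ ‖F n‖ * ‖fund B n * R * (fund B k)⁻¹‖ * ‖(F k)⁻¹‖ := by
            apply mul_le_mul_of_nonneg_right (norm_mul_le _ _) (norm_nonneg _)
        _ ≤ M1 * (K * ρ ^ z) * M2 := by
            apply mul_le_mul
            · exact mul_le_mul (hM1 n) hb (norm_nonneg _) hM1'
            · exact hM2 k
            · exact norm_nonneg _
            · exact mul_nonneg hM1' (mul_nonneg (le_trans zero_le_one hK) (zpow_pos hρ.1 _).le)
    refine le_trans e1 ?_
    have : M1 * (K * ρ ^ z) * M2 = (M1 * M2 * K) * ρ ^ z := by ring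
    rw [this]
    exact mul_le_mul_of_nonneg_right (le_max_right 1 _) (zpow_pos hρ.1 _).le
  refine ⟨K', ρ, le_trans (le_max_left 1 _) (le_refl _), hρ, F 0 * Q * (F 0)⁻¹, ?_, ?_, ?_⟩
  · calc (F 0 * Q * (F 0)⁻¹) * (F 0 * Q * (F 0)⁻¹)
        = F 0 * (Q * (((F 0)⁻¹ * F 0) * Q)) * (F 0)⁻¹ := by simp only [Matrix.mul_assoc]
      _ = F 0 * Q * (F 0)⁻¹ := by
          rw [matrix_inv_mul (hF 0)]
          simp only [Matrix.one_mul, ← Matrix.mul_assoc, hQ]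
  · intro n k hkn
    exact keybound Q n k (n - k) (h1 n k hkn)
  · intro n k hnk
    have hone : (1 : Matrix (Fin p) (Fin p) ℝ) - F 0 * Q * (F 0)⁻¹
        = F 0 * (1 - Q) * (F 0)⁻¹ := by
      rw [Matrix.mul_sub, Matrix.sub_mul, Matrix.mul_one, matrix_mul_inv (hF 0)]
    rw [hone]
    exact keybound (1 - Q) n k (k - n) (h2 n k hnk)

end kinsim
section blocks

variable {p q r : ℕ}

lemma my_fromBlocks_sub (a a' : Matrix (Fin q) (Fin q) ℝ) (b b' : Matrix (Fin q) (Fin r) ℝ)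
    (c c' : Matrix (Fin r) (Fin q) ℝ) (d d' : Matrix (Fin r) (Fin r) ℝ) :
    Matrix.fromBlocks a b c d - Matrix.fromBlocks a' b' c' d'
      = Matrix.fromBlocks (a - a') (b - b') (c - c') (d - d') := by
  ext (i | i) (j | j) <;> simp [Matrix.fromBlocks]

lemma lift_inj (e : Fin p ≃ Fin q ⊕ Fin r)
    {X Y : Matrix (Fin q ⊕ Fin r) (Fin q ⊕ Fin r) ℝ}
    (h : X.submatrix e e = Y.submatrix e e) : X = Y := by
  have := congrArg (fun M => Matrix.submatrix M ⇑e.symm ⇑e.symm) h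
  simpa [Matrix.submatrix_submatrix, Equiv.self_comp_symm, Matrix.submatrix_id_id] using this

lemma lift_one (e : Fin p ≃ Fin q ⊕ Fin r) :
    (1 : Matrix (Fin p) (Fin p) ℝ)
      = (Matrix.fromBlocks 1 0 0 (1 : Matrix (Fin r) (Fin r) ℝ)).submatrix e e := by
  rw [Matrix.fromBlocks_one, Matrix.submatrix_one_equiv]

variable (e : Fin p ≃ Fin q ⊕ Fin r)
  (B1 : ℤ → Matrix (Fin q) (Fin q) ℝ) (B2 : ℤ → Matrix (Fin r) (Fin r) ℝ)

lemma fund_blocks_inv (h1u : ∀ n, IsUnit (B1 n)) (h2u : ∀ n, IsUnit (B2 n)) (n : ℤ) :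
    (fund (fun k => (Matrix.fromBlocks (B1 k) 0 0 (B2 k)).submatrix e e) n)⁻¹
      = (Matrix.fromBlocks (fund B1 n)⁻¹ 0 0 (fund B2 n)⁻¹).submatrix e e := by
  rw [fund_blocks e B1 B2 h1u h2u n,
    submatrix_equiv_inv e (isUnit_fromBlocks_diag (isUnit_fund B1 h1u n) (isUnit_fund B2 h2u n)),
    fromBlocks_diag_inv (isUnit_fund B1 h1u n) (isUnit_fund B2 h2u n)]

lemma blocks_triple (h1u : ∀ n, IsUnit (B1 n)) (h2u : ∀ n, IsUnit (B2 n))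
    (R1 : Matrix (Fin q) (Fin q) ℝ) (R2 : Matrix (Fin r) (Fin r) ℝ) (n k : ℤ) :
    fund (fun j => (Matrix.fromBlocks (B1 j) 0 0 (B2 j)).submatrix e e) n
      * (Matrix.fromBlocks R1 0 0 R2).submatrix e e
      * (fund (fun j => (Matrix.fromBlocks (B1 j) 0 0 (B2 j)).submatrix e e) k)⁻¹
    = (Matrix.fromBlocks (fund B1 n * R1 * (fund B1 k)⁻¹) 0 0
        (fund B2 n * R2 * (fund B2 k)⁻¹)).submatrix e e := by
  rw [fund_blocks e B1 B2 h1u h2u n, fund_blocks_inv e B1 B2 h1u h2u k,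
    Matrix.submatrix_mul_equiv, Matrix.submatrix_mul_equiv, Matrix.fromBlocks_multiply,
    Matrix.fromBlocks_multiply]
  simp

lemma norm_lift_diag (X : Matrix (Fin q) (Fin q) ℝ) (Y : Matrix (Fin r) (Fin r) ℝ) :
    ‖(Matrix.fromBlocks X 0 0 Y).submatrix e e‖ ≤ max ‖X‖ ‖Y‖ := by
  rw [norm_submatrix_equiv]
  exact norm_blocks_diag_le X Y

lemma norm_lift_diag_left (X : Matrix (Fin q) (Fin q) ℝ) (Y : Matrix (Fin r) (Fin r) ℝ) :
    ‖X‖ ≤ ‖(Matrix.fromBlocks X 0 0 Y).submatrix e e‖ := by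
  rw [norm_submatrix_equiv]
  exact norm_blocks_left X 0 0 Y

lemma norm_lift_diag_right (X : Matrix (Fin q) (Fin q) ℝ) (Y : Matrix (Fin r) (Fin r) ℝ) :
    ‖Y‖ ≤ ‖(Matrix.fromBlocks X 0 0 Y).submatrix e e‖ := by
  rw [norm_submatrix_equiv]
  exact norm_blocks_right X 0 0 Y

lemma expDich_blocks_join (h1u : ∀ n, IsUnit (B1 n)) (h2u : ∀ n, IsUnit (B2 n))
    (h1 : ExpDich B1) (h2 : ExpDich B2) :
    ExpDich (fun n => (Matrix.fromBlocks (B1 n) 0 0 (B2 n)).submatrix e e) := by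
  obtain ⟨K1, ρ1, hK1, hρ1, P1, hP1, h11, h12⟩ := h1
  obtain ⟨K2, ρ2, hK2, hρ2, P2, hP2, h21, h22⟩ := h2
  set K := max K1 K2 with hKdef
  set ρ := max ρ1 ρ2 with hρdef
  have hρmem : ρ ∈ Set.Ioo (0:ℝ) 1 := ⟨lt_max_of_lt_left hρ1.1, max_lt hρ1.2 hρ2.2⟩
  have hKK : (1:ℝ) ≤ K := le_trans hK1 (le_max_left _ _)
  have bound : ∀ (x y : ℝ) (z : ℤ), 0 ≤ z → x ≤ K1 * ρ1 ^ z → y ≤ K2 * ρ2 ^ z →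
      max x y ≤ K * ρ ^ z := by
    intro x y z hz hx hy
    apply max_le
    · exact le_trans hx (mul_le_mul (le_max_left _ _)
        (zpow_le_zpow_base hρ1.1 (le_max_left _ _) hz) (zpow_pos hρ1.1 _).le
        (le_trans zero_le_one hKK))
    · exact le_trans hy (mul_le_mul (le_max_right _ _)
        (zpow_le_zpow_base hρ2.1 (le_max_right _ _) hz) (zpow_pos hρ2.1 _).le
        (le_trans zero_le_one hKK))
  refine ⟨K, ρ, hKK, hρmem, (Matrix.fromBlocks P1 0 0 P2).submatrix e e, ?_, ?_, ?_⟩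
  · rw [Matrix.submatrix_mul_equiv, Matrix.fromBlocks_multiply]
    congr 1 <;> simp [hP1, hP2]
  · intro n k hkn
    rw [blocks_triple e B1 B2 h1u h2u P1 P2 n k]
    exact le_trans (norm_lift_diag e _ _)
      (bound _ _ _ (by omega) (h11 n k hkn) (h21 n k hkn))
  · intro n k hnk
    have hsub : (1 : Matrix (Fin p) (Fin p) ℝ) - (Matrix.fromBlocks P1 0 0 P2).submatrix e e
        = (Matrix.fromBlocks (1 - P1) 0 0 (1 - P2)).submatrix e e := by
      rw [lift_one e, show ((Matrix.fromBlocks 1 0 0 1).submatrix ⇑e ⇑e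
            - (Matrix.fromBlocks P1 0 0 P2).submatrix ⇑e ⇑e : Matrix (Fin p) (Fin p) ℝ)
          = ((Matrix.fromBlocks 1 0 0 1 - Matrix.fromBlocks P1 0 0 P2).submatrix ⇑e ⇑e) by
        rw [Matrix.submatrix_sub]; rfl]
      rw [my_fromBlocks_sub]
      simp
    rw [hsub, blocks_triple e B1 B2 h1u h2u _ _ n k]
    exact le_trans (norm_lift_diag e _ _)
      (bound _ _ _ (by omega) (h12 n k hnk) (h22 n k hnk))

end blocks
section splits

variable {p q r : ℕ}

lemma lift_sub (e : Fin p ≃ Fin q ⊕ Fin r)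
    (X Y : Matrix (Fin q ⊕ Fin r) (Fin q ⊕ Fin r) ℝ) :
    X.submatrix ⇑e ⇑e - Y.submatrix ⇑e ⇑e = (X - Y).submatrix ⇑e ⇑e := by
  rw [Matrix.submatrix_sub]; rfl

lemma toBlocks11_zero : (0 : Matrix (Fin q ⊕ Fin r) (Fin q ⊕ Fin r) ℝ).toBlocks₁₁ = 0 := rfl
lemma toBlocks12_zero : (0 : Matrix (Fin q ⊕ Fin r) (Fin q ⊕ Fin r) ℝ).toBlocks₁₂ = 0 := rfl
lemma toBlocks21_zero : (0 : Matrix (Fin q ⊕ Fin r) (Fin q ⊕ Fin r) ℝ).toBlocks₂₁ = 0 := rfl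
lemma toBlocks22_zero : (0 : Matrix (Fin q ⊕ Fin r) (Fin q ⊕ Fin r) ℝ).toBlocks₂₂ = 0 := rfl

variable (e : Fin p ≃ Fin q ⊕ Fin r)
  (B1 : ℤ → Matrix (Fin q) (Fin q) ℝ) (B2 : ℤ → Matrix (Fin r) (Fin r) ℝ)

lemma split_mid (h1u : ∀ n, IsUnit (B1 n)) (h2u : ∀ n, IsUnit (B2 n))
    (X Y : Matrix (Fin p) (Fin p) ℝ) (n : ℤ) :
    X * Y = (X * (fund (fun j => (Matrix.fromBlocks (B1 j) 0 0 (B2 j)).submatrix e e) n)⁻¹)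
      * (fund (fun j => (Matrix.fromBlocks (B1 j) 0 0 (B2 j)).submatrix e e) n * Y) := by
  have hu : IsUnit (fund (fun j => (Matrix.fromBlocks (B1 j) 0 0 (B2 j)).submatrix e e) n) :=
    isUnit_fund _ (fun j => isUnit_submatrix_equiv e (isUnit_fromBlocks_diag (h1u j) (h2u j))) n
  rw [Matrix.mul_assoc, ← Matrix.mul_assoc _ _ Y, matrix_inv_mul hu, Matrix.one_mul]

/-- If the block-diagonal system has a dichotomy and the second block has a dichotomy
with projector 0, then the first block has a dichotomy. -/
lemma expDich_block_split₁ (h1u : ∀ n, IsUnit (B1 n)) (h2u : ∀ n, IsUnit (B2 n))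
    (hS : ExpDich (fun n => (Matrix.fromBlocks (B1 n) 0 0 (B2 n)).submatrix e e))
    (h2 : ExpDichWith B2 0) : ExpDich B1 := by
  classical
  set S := fun n => (Matrix.fromBlocks (B1 n) 0 0 (B2 n)).submatrix ⇑e ⇑e with hSdef
  obtain ⟨K, ρ, hK, hρ, Q, hQ, hQ1, hQ2⟩ := hS
  obtain ⟨-, K2, ρ2, hK2, hρ2, -, h22⟩ := h2
  have hK0 : (0:ℝ) ≤ K := le_trans zero_le_one hK
  have hK20 : (0:ℝ) ≤ K2 := le_trans zero_le_one hK2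
  -- decay facts for the second block
  have hg2inv : ∀ n : ℤ, 0 ≤ n → ‖(fund B2 n)⁻¹‖ ≤ K2 * ρ2 ^ n := by
    intro n hn
    have h := h22 0 n hn
    rw [fund_zero, sub_zero, Matrix.one_mul, Matrix.one_mul, sub_zero] at h
    exact h
  have hg2 : ∀ n : ℤ, n ≤ 0 → ‖fund B2 n‖ ≤ K2 * ρ2 ^ (-n) := by
    intro n hn
    have h := h22 n 0 hn
    rw [fund_zero, sub_zero, Matrix.mul_one, inv_one, Matrix.mul_one, zero_sub] at h
    exact h
  -- bounds on Q
  have hQright : ∀ n : ℤ, 0 ≤ n → ‖fund S n * Q‖ ≤ K * ρ ^ n := by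
    intro n hn
    have h := hQ1 n 0 hn
    rw [fund_zero, inv_one, Matrix.mul_one, sub_zero] at h
    exact h
  have hQleft : ∀ n : ℤ, n ≤ 0 → ‖Q * (fund S n)⁻¹‖ ≤ K * ρ ^ (-n) := by
    intro n hn
    have h := hQ1 0 n hn
    rw [fund_zero, Matrix.one_mul, zero_sub] at h
    exact h
  have hρρ2 : ρ2 * ρ < 1 := by
    calc ρ2 * ρ < 1 * 1 := mul_lt_mul'' hρ2.2 hρ.2 hρ2.1.le hρ.1.le
      _ = 1 := one_mul 1
  set E2 := (Matrix.fromBlocks (0 : Matrix (Fin q) (Fin q) ℝ) 0 0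
      (1 : Matrix (Fin r) (Fin r) ℝ)).submatrix ⇑e ⇑e with hE2def
  -- E2 * Q = 0
  have hE2Q : E2 * Q = 0 := by
    apply matrix_eq_zero_of_norm_le_geom (K := K2 * K) (r := ρ2 * ρ)
      (mul_nonneg hK20 hK0) (mul_nonneg hρ2.1.le hρ.1.le) hρρ2
    intro nn
    have hn : (0:ℤ) ≤ (nn:ℤ) := Int.natCast_nonneg nn
    have hfact : E2 * (fund S (nn:ℤ))⁻¹
        = (Matrix.fromBlocks 0 0 0 (fund B2 (nn:ℤ))⁻¹).submatrix ⇑e ⇑e := by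
      rw [hE2def, fund_blocks_inv e B1 B2 h1u h2u, Matrix.submatrix_mul_equiv,
        Matrix.fromBlocks_multiply]
      simp
    have hb1 : ‖E2 * (fund S (nn:ℤ))⁻¹‖ ≤ K2 * ρ2 ^ (nn:ℤ) := by
      rw [hfact, norm_submatrix_equiv]
      refine le_trans (norm_blocks_diag_le _ _) ?_
      rw [norm_zero, max_eq_right (norm_nonneg _)]
      exact hg2inv _ hn
    calc ‖E2 * Q‖ = ‖(E2 * (fund S (nn:ℤ))⁻¹) * (fund S (nn:ℤ) * Q)‖ := by
          rw [← split_mid e B1 B2 h1u h2u]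
      _ ≤ ‖E2 * (fund S (nn:ℤ))⁻¹‖ * ‖fund S (nn:ℤ) * Q‖ := norm_mul_le _ _
      _ ≤ (K2 * ρ2 ^ (nn:ℤ)) * (K * ρ ^ (nn:ℤ)) :=
          mul_le_mul hb1 (hQright _ hn) (norm_nonneg _)
            (mul_nonneg hK20 (zpow_pos hρ2.1 _).le)
      _ = (K2 * K) * (ρ2 * ρ) ^ nn := by
          rw [zpow_natCast, zpow_natCast, mul_pow]; ring
  -- Q * E2 = 0
  have hQE2 : Q * E2 = 0 := by
    apply matrix_eq_zero_of_norm_le_geom (K := K * K2) (r := ρ2 * ρ)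
      (mul_nonneg hK0 hK20) (mul_nonneg hρ2.1.le hρ.1.le) hρρ2
    intro nn
    have hn : (-(nn:ℤ)) ≤ 0 := by omega
    have hfact : fund S (-(nn:ℤ)) * E2
        = (Matrix.fromBlocks 0 0 0 (fund B2 (-(nn:ℤ)))).submatrix ⇑e ⇑e := by
      rw [hE2def, hSdef, fund_blocks e B1 B2 h1u h2u, Matrix.submatrix_mul_equiv,
        Matrix.fromBlocks_multiply]
      simp
    have hb1 : ‖fund S (-(nn:ℤ)) * E2‖ ≤ K2 * ρ2 ^ (nn:ℤ) := by
      rw [hfact, norm_submatrix_equiv]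
      refine le_trans (norm_blocks_diag_le _ _) ?_
      rw [norm_zero, max_eq_right (norm_nonneg _)]
      have := hg2 _ hn
      rwa [neg_neg] at this
    calc ‖Q * E2‖ = ‖(Q * (fund S (-(nn:ℤ)))⁻¹) * (fund S (-(nn:ℤ)) * E2)‖ := by
          rw [← split_mid e B1 B2 h1u h2u]
      _ ≤ ‖Q * (fund S (-(nn:ℤ)))⁻¹‖ * ‖fund S (-(nn:ℤ)) * E2‖ := norm_mul_le _ _
      _ ≤ (K * ρ ^ (nn:ℤ)) * (K2 * ρ2 ^ (nn:ℤ)) := by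
          refine mul_le_mul ?_ hb1 (norm_nonneg _) (mul_nonneg hK0 (zpow_pos hρ.1 _).le)
          have := hQleft _ hn
          rwa [neg_neg] at this
      _ = (K * K2) * (ρ2 * ρ) ^ nn := by
          rw [zpow_natCast, zpow_natCast, mul_pow]; ring
  -- structure of Q
  set R := Q.submatrix ⇑e.symm ⇑e.symm with hRdef
  have hR : Q = R.submatrix ⇑e ⇑e := by
    rw [hRdef, Matrix.submatrix_submatrix]
    simp [Equiv.symm_comp_self]
  have hE2R : Matrix.fromBlocks 0 0 0 (1 : Matrix (Fin r) (Fin r) ℝ) * R = 0 := by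
    apply lift_inj e
    have h' : (Matrix.fromBlocks 0 0 0 (1 : Matrix (Fin r) (Fin r) ℝ) * R).submatrix ⇑e ⇑e
        = E2 * Q := by
      rw [← Matrix.submatrix_mul_equiv (Matrix.fromBlocks 0 0 0 1) R ⇑e e ⇑e, hE2def, hR]
    rw [h', hE2Q]
    simp
  have hRE2 : R * Matrix.fromBlocks 0 0 0 (1 : Matrix (Fin r) (Fin r) ℝ) = 0 := by
    apply lift_inj e
    have h' : (R * Matrix.fromBlocks 0 0 0 (1 : Matrix (Fin r) (Fin r) ℝ)).submatrix ⇑e ⇑e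
        = Q * E2 := by
      rw [← Matrix.submatrix_mul_equiv R (Matrix.fromBlocks 0 0 0 1) ⇑e e ⇑e, hE2def, hR]
    rw [h', hQE2]
    simp
  -- extract the blocks of R
  have hRblocks := (Matrix.fromBlocks_toBlocks R).symm
  have h21 : R.toBlocks₂₁ = 0 := by
    rw [hRblocks, Matrix.fromBlocks_multiply] at hE2R
    have := congrArg Matrix.toBlocks₂₁ hE2R
    simpa [Matrix.toBlocks_fromBlocks₂₁, toBlocks21_zero] using this
  have h22' : R.toBlocks₂₂ = 0 := by
    rw [hRblocks, Matrix.fromBlocks_multiply] at hE2R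
    have := congrArg Matrix.toBlocks₂₂ hE2R
    simpa [Matrix.toBlocks_fromBlocks₂₂, toBlocks22_zero] using this
  have h12 : R.toBlocks₁₂ = 0 := by
    rw [hRblocks, Matrix.fromBlocks_multiply] at hRE2
    have := congrArg Matrix.toBlocks₁₂ hRE2
    simpa [Matrix.toBlocks_fromBlocks₁₂, toBlocks12_zero] using this
  set P1 := R.toBlocks₁₁ with hP1def
  have hRform : R = Matrix.fromBlocks P1 0 0 0 := by
    rw [hRblocks, h21, h22', h12]
  have hQform : Q = (Matrix.fromBlocks P1 0 0 0).submatrix ⇑e ⇑e := by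
    rw [hR, hRform]
  -- idempotency of P1
  have hP1idem : P1 * P1 = P1 := by
    have h' : (Matrix.fromBlocks (P1 * P1) 0 0 (0:Matrix (Fin r) (Fin r) ℝ)).submatrix ⇑e ⇑e
        = (Matrix.fromBlocks P1 0 0 0).submatrix ⇑e ⇑e := by
      calc (Matrix.fromBlocks (P1 * P1) 0 0 (0:Matrix (Fin r) (Fin r) ℝ)).submatrix ⇑e ⇑e
          = ((Matrix.fromBlocks P1 0 0 (0:Matrix (Fin r) (Fin r) ℝ)
              * Matrix.fromBlocks P1 0 0 (0:Matrix (Fin r) (Fin r) ℝ)).submatrix ⇑e ⇑e) := by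
            rw [Matrix.fromBlocks_multiply]
            simp
        _ = Q * Q := by
            rw [← Matrix.submatrix_mul_equiv _ _ ⇑e e ⇑e, ← hQform]
        _ = Q := hQ
        _ = (Matrix.fromBlocks P1 0 0 0).submatrix ⇑e ⇑e := hQform
    have := lift_inj e h'
    have := congrArg Matrix.toBlocks₁₁ this
    simpa [Matrix.toBlocks_fromBlocks₁₁] using this
  -- the dichotomy estimates for B1
  refine ⟨K, ρ, hK, hρ, P1, hP1idem, ?_, ?_⟩
  · intro n k hkn
    have h' := hQ1 n k hkn
    rw [hQform, hSdef] at h'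
    rw [blocks_triple e B1 B2 h1u h2u P1 0 n k] at h'
    refine le_trans ?_ h'
    exact norm_lift_diag_left e _ _
  · intro n k hnk
    have h' := hQ2 n k hnk
    have hsub : (1 : Matrix (Fin p) (Fin p) ℝ) - Q
        = (Matrix.fromBlocks (1 - P1) 0 0 (1 : Matrix (Fin r) (Fin r) ℝ)).submatrix ⇑e ⇑e := by
      rw [lift_one e, hQform, lift_sub e, my_fromBlocks_sub]
      simp
    rw [hsub, hSdef, blocks_triple e B1 B2 h1u h2u _ _ n k] at h'
    refine le_trans ?_ h'
    exact norm_lift_diag_left e _ _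

/-- If the block-diagonal system has a dichotomy and the first block has a dichotomy
with projector 1, then the second block has a dichotomy. -/
lemma expDich_block_split₂ (h1u : ∀ n, IsUnit (B1 n)) (h2u : ∀ n, IsUnit (B2 n))
    (hS : ExpDich (fun n => (Matrix.fromBlocks (B1 n) 0 0 (B2 n)).submatrix e e))
    (h1 : ExpDichWith B1 1) : ExpDich B2 := by
  classical
  set S := fun n => (Matrix.fromBlocks (B1 n) 0 0 (B2 n)).submatrix ⇑e ⇑e with hSdef
  obtain ⟨K, ρ, hK, hρ, Q, hQ, hQ1, hQ2⟩ := hS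
  obtain ⟨-, K1, ρ1, hK1, hρ1, h11, -⟩ := h1
  have hK0 : (0:ℝ) ≤ K := le_trans zero_le_one hK
  have hK10 : (0:ℝ) ≤ K1 := le_trans zero_le_one hK1
  -- decay facts for the first block
  have hg1 : ∀ n : ℤ, 0 ≤ n → ‖fund B1 n‖ ≤ K1 * ρ1 ^ n := by
    intro n hn
    have h := h11 n 0 hn
    rw [fund_zero, Matrix.mul_one, inv_one, Matrix.mul_one, sub_zero] at h
    exact h
  have hg1inv : ∀ n : ℤ, n ≤ 0 → ‖(fund B1 n)⁻¹‖ ≤ K1 * ρ1 ^ (-n) := by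
    intro n hn
    have h := h11 0 n hn
    rw [fund_zero, Matrix.one_mul, Matrix.one_mul, zero_sub] at h
    exact h
  -- bounds on 1 - Q
  have hQ'right : ∀ n : ℤ, n ≤ 0 → ‖fund S n * (1 - Q)‖ ≤ K * ρ ^ (-n) := by
    intro n hn
    have h := hQ2 n 0 hn
    rw [fund_zero, inv_one, Matrix.mul_one, zero_sub] at h
    exact h
  have hQ'left : ∀ n : ℤ, 0 ≤ n → ‖(1 - Q) * (fund S n)⁻¹‖ ≤ K * ρ ^ n := by
    intro n hn
    have h := hQ2 0 n hn
    rw [fund_zero, Matrix.one_mul, sub_zero] at h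
    exact h
  have hρρ1 : ρ1 * ρ < 1 := by
    calc ρ1 * ρ < 1 * 1 := mul_lt_mul'' hρ1.2 hρ.2 hρ1.1.le hρ.1.le
      _ = 1 := one_mul 1
  set E1 := (Matrix.fromBlocks (1 : Matrix (Fin q) (Fin q) ℝ) 0 0
      (0 : Matrix (Fin r) (Fin r) ℝ)).submatrix ⇑e ⇑e with hE1def
  -- (1 - Q) * E1 = 0
  have hQ'E1 : (1 - Q) * E1 = 0 := by
    apply matrix_eq_zero_of_norm_le_geom (K := K * K1) (r := ρ1 * ρ)
      (mul_nonneg hK0 hK10) (mul_nonneg hρ1.1.le hρ.1.le) hρρ1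
    intro nn
    have hn : (0:ℤ) ≤ (nn:ℤ) := Int.natCast_nonneg nn
    have hfact : fund S (nn:ℤ) * E1
        = (Matrix.fromBlocks (fund B1 (nn:ℤ)) 0 0 0).submatrix ⇑e ⇑e := by
      rw [hE1def, hSdef, fund_blocks e B1 B2 h1u h2u, Matrix.submatrix_mul_equiv,
        Matrix.fromBlocks_multiply]
      simp
    have hb1 : ‖fund S (nn:ℤ) * E1‖ ≤ K1 * ρ1 ^ (nn:ℤ) := by
      rw [hfact, norm_submatrix_equiv]
      refine le_trans (norm_blocks_diag_le _ _) ?_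
      rw [norm_zero, max_eq_left (norm_nonneg _)]
      exact hg1 _ hn
    calc ‖(1 - Q) * E1‖ = ‖((1 - Q) * (fund S (nn:ℤ))⁻¹) * (fund S (nn:ℤ) * E1)‖ := by
          rw [← split_mid e B1 B2 h1u h2u]
      _ ≤ ‖(1 - Q) * (fund S (nn:ℤ))⁻¹‖ * ‖fund S (nn:ℤ) * E1‖ := norm_mul_le _ _
      _ ≤ (K * ρ ^ (nn:ℤ)) * (K1 * ρ1 ^ (nn:ℤ)) :=
          mul_le_mul (hQ'left _ hn) hb1 (norm_nonneg _)
            (mul_nonneg hK0 (zpow_pos hρ.1 _).le)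
      _ = (K * K1) * (ρ1 * ρ) ^ nn := by
          rw [zpow_natCast, zpow_natCast, mul_pow]; ring
  -- E1 * (1 - Q) = 0
  have hE1Q' : E1 * (1 - Q) = 0 := by
    apply matrix_eq_zero_of_norm_le_geom (K := K1 * K) (r := ρ1 * ρ)
      (mul_nonneg hK10 hK0) (mul_nonneg hρ1.1.le hρ.1.le) hρρ1
    intro nn
    have hn : (-(nn:ℤ)) ≤ 0 := by omega
    have hfact : E1 * (fund S (-(nn:ℤ)))⁻¹
        = (Matrix.fromBlocks (fund B1 (-(nn:ℤ)))⁻¹ 0 0 0).submatrix ⇑e ⇑e := by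
      rw [hE1def, fund_blocks_inv e B1 B2 h1u h2u, Matrix.submatrix_mul_equiv,
        Matrix.fromBlocks_multiply]
      simp
    have hb1 : ‖E1 * (fund S (-(nn:ℤ)))⁻¹‖ ≤ K1 * ρ1 ^ (nn:ℤ) := by
      rw [hfact, norm_submatrix_equiv]
      refine le_trans (norm_blocks_diag_le _ _) ?_
      rw [norm_zero, max_eq_left (norm_nonneg _)]
      have := hg1inv _ hn
      rwa [neg_neg] at this
    calc ‖E1 * (1 - Q)‖ = ‖(E1 * (fund S (-(nn:ℤ)))⁻¹) * (fund S (-(nn:ℤ)) * (1 - Q))‖ := by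
          rw [← split_mid e B1 B2 h1u h2u]
      _ ≤ ‖E1 * (fund S (-(nn:ℤ)))⁻¹‖ * ‖fund S (-(nn:ℤ)) * (1 - Q)‖ := norm_mul_le _ _
      _ ≤ (K1 * ρ1 ^ (nn:ℤ)) * (K * ρ ^ (nn:ℤ)) := by
          refine mul_le_mul hb1 ?_ (norm_nonneg _) (mul_nonneg hK10 (zpow_pos hρ1.1 _).le)
          have := hQ'right _ hn
          rwa [neg_neg] at this
      _ = (K1 * K) * (ρ1 * ρ) ^ nn := by
          rw [zpow_natCast, zpow_natCast, mul_pow]; ring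
  -- structure of 1 - Q
  set R := (1 - Q).submatrix ⇑e.symm ⇑e.symm with hRdef
  have hR : 1 - Q = R.submatrix ⇑e ⇑e := by
    rw [hRdef, Matrix.submatrix_submatrix]
    simp [Equiv.symm_comp_self]
  have hE1R : Matrix.fromBlocks (1 : Matrix (Fin q) (Fin q) ℝ) 0 0 0 * R = 0 := by
    apply lift_inj e
    have h' : (Matrix.fromBlocks (1 : Matrix (Fin q) (Fin q) ℝ) 0 0 0 * R).submatrix ⇑e ⇑e
        = E1 * (1 - Q) := by
      rw [← Matrix.submatrix_mul_equiv (Matrix.fromBlocks 1 0 0 0) R ⇑e e ⇑e, hE1def, hR]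
    rw [h', hE1Q']
    simp
  have hRE1 : R * Matrix.fromBlocks (1 : Matrix (Fin q) (Fin q) ℝ) 0 0 0 = 0 := by
    apply lift_inj e
    have h' : (R * Matrix.fromBlocks (1 : Matrix (Fin q) (Fin q) ℝ) 0 0 0).submatrix ⇑e ⇑e
        = (1 - Q) * E1 := by
      rw [← Matrix.submatrix_mul_equiv R (Matrix.fromBlocks 1 0 0 0) ⇑e e ⇑e, hE1def, hR]
    rw [h', hQ'E1]
    simp
  have hRblocks := (Matrix.fromBlocks_toBlocks R).symm
  have h11' : R.toBlocks₁₁ = 0 := by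
    rw [hRblocks, Matrix.fromBlocks_multiply] at hE1R
    have := congrArg Matrix.toBlocks₁₁ hE1R
    simpa [Matrix.toBlocks_fromBlocks₁₁, toBlocks11_zero] using this
  have h12' : R.toBlocks₁₂ = 0 := by
    rw [hRblocks, Matrix.fromBlocks_multiply] at hE1R
    have := congrArg Matrix.toBlocks₁₂ hE1R
    simpa [Matrix.toBlocks_fromBlocks₁₂, toBlocks12_zero] using this
  have h21' : R.toBlocks₂₁ = 0 := by
    rw [hRblocks, Matrix.fromBlocks_multiply] at hRE1
    have := congrArg Matrix.toBlocks₂₁ hRE1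
    simpa [Matrix.toBlocks_fromBlocks₂₁, toBlocks21_zero] using this
  set P2' := R.toBlocks₂₂ with hP2'def
  have hRform : R = Matrix.fromBlocks 0 0 0 P2' := by
    rw [hRblocks, h11', h12', h21']
  have hQ'form : 1 - Q = (Matrix.fromBlocks 0 0 0 P2').submatrix ⇑e ⇑e := by
    rw [hR, hRform]
  set P2 : Matrix (Fin r) (Fin r) ℝ := 1 - P2' with hP2def
  have hQform : Q = (Matrix.fromBlocks 1 0 0 P2).submatrix ⇑e ⇑e := by
    have : Q = 1 - (1 - Q) := (sub_sub_cancel 1 Q).symm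
    rw [this, hQ'form, lift_one e, lift_sub e, my_fromBlocks_sub]
    simp [hP2def]
  have hQ'form2 : 1 - Q
      = (Matrix.fromBlocks 0 0 0 ((1:Matrix (Fin r) (Fin r) ℝ) - P2)).submatrix ⇑e ⇑e := by
    rw [hQ'form, hP2def]
    simp
  -- idempotency of P2
  have hP2idem : P2 * P2 = P2 := by
    have h' : (Matrix.fromBlocks (1:Matrix (Fin q) (Fin q) ℝ) 0 0 (P2 * P2)).submatrix ⇑e ⇑e
        = (Matrix.fromBlocks 1 0 0 P2).submatrix ⇑e ⇑e := by
      calc (Matrix.fromBlocks (1:Matrix (Fin q) (Fin q) ℝ) 0 0 (P2 * P2)).submatrix ⇑e ⇑e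
          = ((Matrix.fromBlocks (1:Matrix (Fin q) (Fin q) ℝ) 0 0 P2
              * Matrix.fromBlocks (1:Matrix (Fin q) (Fin q) ℝ) 0 0 P2).submatrix ⇑e ⇑e) := by
            rw [Matrix.fromBlocks_multiply]
            simp
        _ = Q * Q := by
            rw [← Matrix.submatrix_mul_equiv _ _ ⇑e e ⇑e, ← hQform]
        _ = Q := hQ
        _ = (Matrix.fromBlocks 1 0 0 P2).submatrix ⇑e ⇑e := hQform
    have := lift_inj e h'
    have := congrArg Matrix.toBlocks₂₂ this
    simpa [Matrix.toBlocks_fromBlocks₂₂] using this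
  refine ⟨K, ρ, hK, hρ, P2, hP2idem, ?_, ?_⟩
  · intro n k hkn
    have h' := hQ1 n k hkn
    rw [hQform, hSdef, blocks_triple e B1 B2 h1u h2u _ _ n k] at h'
    refine le_trans ?_ h'
    exact norm_lift_diag_right e _ _
  · intro n k hnk
    have h' := hQ2 n k hnk
    rw [hQ'form2, hSdef, blocks_triple e B1 B2 h1u h2u _ _ n k] at h'
    refine le_trans ?_ h'
    exact norm_lift_diag_right e _ _

end splits
lemma expDichWith_expDich {s : ℕ} {X : ℤ → Matrix (Fin s) (Fin s) ℝ}
    {P : Matrix (Fin s) (Fin s) ℝ} (h : ExpDichWith X P) : ExpDich X := by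
  obtain ⟨hP, K, ρ, hK, hρ, h1, h2⟩ := h
  exact ⟨K, ρ, hK, hρ, P, hP, h1, h2⟩

/-- Spectra of the two blocks in the block-diagonalization at a gap point λ in the last
spectral gap: the first block carries the first ℓ-1 spectral intervals and the second
block carries the last one. -/
theorem block_spectra (ℓ : ℕ) (hℓ : 2 ≤ ℓ) (a b : Fin ℓ → ℝ)
    (hpos : ∀ i, 0 < a i) (hab : ∀ i, a i ≤ b i)
    (hord : ∀ i j : Fin ℓ, i < j → b i < a j)
    (A : ℤ → Matrix (Fin d) (Fin d) ℝ)
    (hA : ∀ n, IsUnit (A n))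
    (hbdd : ∃ M : ℝ, ∀ n, ‖A n‖ ≤ M ∧ ‖(A n)⁻¹‖ ≤ M)
    (hspec : SSpec A = ⋃ i : Fin ℓ, Set.Icc (a i) (b i))
    (lam : ℝ)
    (hlam : lam ∈ Set.Ioo (b ⟨ℓ - 2, by omega⟩) (a ⟨ℓ - 1, by omega⟩))
    (m : ℕ) (hm : m < d) (hsum : d = m + (d - m))
    (P : Matrix (Fin d) (Fin d) ℝ)
    (hP : ExpDichWith (fun n => lam⁻¹ • A n) P) (hrank : P.rank = m)
    (A1 : ℤ → Matrix (Fin m) (Fin m) ℝ)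
    (A2 : ℤ → Matrix (Fin (d - m)) (Fin (d - m)) ℝ)
    (hsim : KinSim (fun n => lam⁻¹ • A n)
      (fun n => (Matrix.fromBlocks (A1 n) 0 0 (A2 n)).submatrix
        ((finCongr hsum).trans finSumFinEquiv.symm)
        ((finCongr hsum).trans finSumFinEquiv.symm)))
    (hA1 : ExpDichWith A1 1) (hA2 : ExpDichWith A2 0) :
    SSpec (fun n => lam • A1 n) =
      (⋃ i : Fin ℓ, ⋃ _ : (i : ℕ) < ℓ - 1, Set.Icc (a i) (b i)) ∧
    SSpec (fun n => lam • A2 n) =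
      Set.Icc (a ⟨ℓ - 1, by omega⟩) (b ⟨ℓ - 1, by omega⟩) := by
  classical
  set e : Fin d ≃ Fin m ⊕ Fin (d - m) := (finCongr hsum).trans finSumFinEquiv.symm with hedef
  have hlam0 : 0 < lam := lt_trans (lt_of_lt_of_le (hpos _) (hab _)) hlam.1
  have hA' : ∀ n, IsUnit (lam⁻¹ • A n) :=
    fun n => isUnit_smul_matrix (inv_ne_zero hlam0.ne') (hA n)
  obtain ⟨F, hF, hFb1, hFb2, hrel⟩ := hsim
  have hSu : ∀ n, IsUnit ((Matrix.fromBlocks (A1 n) 0 0 (A2 n)).submatrix ⇑e ⇑e) :=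
    kinSim_units hA' F hF hrel
  have hdet : ∀ n, IsUnit ((A1 n).det * (A2 n).det) := by
    intro n
    have h := (Matrix.isUnit_iff_isUnit_det _).mp (hSu n)
    rwa [Matrix.det_submatrix_equiv_self, Matrix.det_fromBlocks_zero₂₁] at h
  have h1u : ∀ n, IsUnit (A1 n) :=
    fun n => (Matrix.isUnit_iff_isUnit_det _).mpr (isUnit_of_mul_isUnit_left (hdet n))
  have h2u : ∀ n, IsUnit (A2 n) := by
    intro n
    refine (Matrix.isUnit_iff_isUnit_det _).mpr ?_
    have := hdet n
    rw [mul_comm] at this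
    exact isUnit_of_mul_isUnit_left this
  -- the scaled block system
  have hSscale : ∀ ν : ℝ,
      (fun n => ν⁻¹ • ((Matrix.fromBlocks (A1 n) 0 0 (A2 n)).submatrix ⇑e ⇑e))
        = (fun n => (Matrix.fromBlocks (ν⁻¹ • A1 n) 0 0 (ν⁻¹ • A2 n)).submatrix ⇑e ⇑e) := by
    intro ν
    funext n
    ext i j
    rcases h : e i with i' | i' <;> rcases h2 : e j with j' | j' <;>
      simp [Matrix.submatrix_apply, Matrix.smul_apply, h, h2, Matrix.fromBlocks]
  -- kinematic similarity at every scale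
  have hsim' : ∀ ν : ℝ, 0 < ν → KinSim (fun n => (lam * ν)⁻¹ • A n)
      (fun n => ν⁻¹ • ((Matrix.fromBlocks (A1 n) 0 0 (A2 n)).submatrix ⇑e ⇑e)) := by
    intro ν hν
    refine ⟨F, hF, hFb1, hFb2, fun n => ?_⟩
    show F (n + 1) * (ν⁻¹ • _) = ((lam * ν)⁻¹ • A n) * F n
    rw [mul_smul_comm, hrel n, smul_mul_assoc, smul_smul, mul_inv, mul_comm ν⁻¹ lam⁻¹]
    exact (smul_mul_assoc _ _ _).symm
  have hunits' : ∀ ν : ℝ, 0 < ν → ∀ n, IsUnit ((lam * ν)⁻¹ • A n) := by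
    intro ν hν n
    exact isUnit_smul_matrix (inv_ne_zero (mul_ne_zero hlam0.ne' hν.ne')) (hA n)
  have h1u' : ∀ ν : ℝ, 0 < ν → ∀ n, IsUnit (ν⁻¹ • A1 n) :=
    fun ν hν n => isUnit_smul_matrix (inv_ne_zero hν.ne') (h1u n)
  have h2u' : ∀ ν : ℝ, 0 < ν → ∀ n, IsUnit (ν⁻¹ • A2 n) :=
    fun ν hν n => isUnit_smul_matrix (inv_ne_zero hν.ne') (h2u n)
  -- bridge lemmas
  have bridge1 : ∀ ν : ℝ, 0 < ν → ν ≤ 1 →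
      (ExpDich (fun n => (lam * ν)⁻¹ • A n) ↔ ExpDich (fun n => ν⁻¹ • A1 n)) := by
    intro ν hν hν1
    constructor
    · intro hED
      have hEDS : ExpDich (fun n =>
          (Matrix.fromBlocks ((ν⁻¹ • A1 ·) n) 0 0 ((ν⁻¹ • A2 ·) n)).submatrix ⇑e ⇑e) := by
        have := kinSim_expDich (fun n => isUnit_submatrix_equiv e
            (isUnit_fromBlocks_diag (h1u' ν hν n) (h2u' ν hν n)))
          (by
            have := kinSim_symm (hsim' ν hν)
            rwa [hSscale ν] at this) hED
        exact this
      exact expDich_block_split₁ e _ _ (h1u' ν hν) (h2u' ν hν) hEDS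
        (expDich_scale_of_proj_zero A2 h2u hA2 hν hν1)
    · intro hED1
      have hED2 : ExpDich (fun n => ν⁻¹ • A2 n) :=
        expDichWith_expDich (expDich_scale_of_proj_zero A2 h2u hA2 hν hν1)
      have hjoin := expDich_blocks_join e _ _ (h1u' ν hν) (h2u' ν hν) hED1 hED2
      have hsim2 := hsim' ν hν
      rw [hSscale ν] at hsim2
      exact kinSim_expDich (hunits' ν hν) hsim2 hjoin
  have bridge2 : ∀ ν : ℝ, 1 ≤ ν →
      (ExpDich (fun n => (lam * ν)⁻¹ • A n) ↔ ExpDich (fun n => ν⁻¹ • A2 n)) := by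
    intro ν hν1
    have hν : 0 < ν := lt_of_lt_of_le one_pos hν1
    constructor
    · intro hED
      have hEDS : ExpDich (fun n =>
          (Matrix.fromBlocks ((ν⁻¹ • A1 ·) n) 0 0 ((ν⁻¹ • A2 ·) n)).submatrix ⇑e ⇑e) := by
        have := kinSim_expDich (fun n => isUnit_submatrix_equiv e
            (isUnit_fromBlocks_diag (h1u' ν hν n) (h2u' ν hν n)))
          (by
            have := kinSim_symm (hsim' ν hν)
            rwa [hSscale ν] at this) hED
        exact this
      exact expDich_block_split₂ e _ _ (h1u' ν hν) (h2u' ν hν) hEDS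
        (expDich_scale_of_proj_one A1 h1u hA1 hν1)
    · intro hED2
      have hED1 : ExpDich (fun n => ν⁻¹ • A1 n) :=
        expDichWith_expDich (expDich_scale_of_proj_one A1 h1u hA1 hν1)
      have hjoin := expDich_blocks_join e _ _ (h1u' ν hν) (h2u' ν hν) hED1 hED2
      have hsim2 := hsim' ν hν
      rw [hSscale ν] at hsim2
      exact kinSim_expDich (hunits' ν hν) hsim2 hjoin
  -- membership translations
  have memS1 : ∀ μ : ℝ, 0 < μ →
      (μ ∈ SSpec (fun n => lam • A1 n) ↔ ¬ ExpDich (fun n => (μ / lam)⁻¹ • A1 n)) := by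
    intro μ hμ
    have harg : (fun n => μ⁻¹ • (lam • A1 n)) = (fun n => (μ / lam)⁻¹ • A1 n) := by
      funext n
      rw [smul_smul]
      congr 1
      field_simp
    constructor
    · intro h
      have := h.2
      rwa [harg] at this
    · intro h
      exact ⟨hμ, by rwa [harg]⟩
  have memS2 : ∀ μ : ℝ, 0 < μ →
      (μ ∈ SSpec (fun n => lam • A2 n) ↔ ¬ ExpDich (fun n => (μ / lam)⁻¹ • A2 n)) := by
    intro μ hμ
    have harg : (fun n => μ⁻¹ • (lam • A2 n)) = (fun n => (μ / lam)⁻¹ • A2 n) := by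
      funext n
      rw [smul_smul]
      congr 1
      field_simp
    constructor
    · intro h
      have := h.2
      rwa [harg] at this
    · intro h
      exact ⟨hμ, by rwa [harg]⟩
  have memA : ∀ μ : ℝ, 0 < μ →
      (μ ∈ SSpec A ↔ ¬ ExpDich (fun n => (lam * (μ / lam))⁻¹ • A n)) := by
    intro μ hμ
    rw [show lam * (μ / lam) = μ from by field_simp]
    constructor
    · intro h; exact h.2
    · intro h; exact ⟨hμ, h⟩
  -- ordering facts
  have hb_le : ∀ i : Fin ℓ, (i:ℕ) ≤ ℓ - 2 → b i ≤ b ⟨ℓ - 2, by omega⟩ := by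
    intro i hi
    rcases lt_or_eq_of_le hi with h | h
    · exact le_of_lt (lt_of_lt_of_le
        (hord i ⟨ℓ-2, by omega⟩ (by rw [Fin.lt_def]; exact h)) (hab _))
    · have : i = ⟨ℓ-2, by omega⟩ := Fin.ext h
      rw [this]
  have hS1ub : ∀ μ : ℝ, μ ∈ SSpec (fun n => lam • A1 n) → μ < lam := by
    intro μ hμ
    by_contra hge
    push_neg at hge
    have hμ0 : 0 < μ := hμ.1
    have hν1 : 1 ≤ μ / lam := (one_le_div hlam0).mpr hge
    have hED := expDichWith_expDich (expDich_scale_of_proj_one A1 h1u hA1 hν1)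
    exact ((memS1 μ hμ0).mp hμ) hED
  have hS2lb : ∀ μ : ℝ, μ ∈ SSpec (fun n => lam • A2 n) → lam < μ := by
    intro μ hμ
    by_contra hge
    push_neg at hge
    have hμ0 : 0 < μ := hμ.1
    have hν0 : 0 < μ / lam := div_pos hμ0 hlam0
    have hν1 : μ / lam ≤ 1 := (div_le_one hlam0).mpr hge
    have hED := expDichWith_expDich (expDich_scale_of_proj_zero A2 h2u hA2 hν0 hν1)
    exact ((memS2 μ hμ0).mp hμ) hED
  have hkey1 : ∀ μ : ℝ, 0 < μ → μ < lam →
      (μ ∈ SSpec (fun n => lam • A1 n) ↔ μ ∈ SSpec A) := by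
    intro μ h0 hlt
    have hν0 : 0 < μ / lam := div_pos h0 hlam0
    have hν1 : μ / lam ≤ 1 := (div_le_one hlam0).mpr hlt.le
    rw [memS1 μ h0, memA μ h0]
    exact not_congr (bridge1 _ hν0 hν1).symm
  have hkey2 : ∀ μ : ℝ, lam < μ →
      (μ ∈ SSpec (fun n => lam • A2 n) ↔ μ ∈ SSpec A) := by
    intro μ hlt
    have h0 : 0 < μ := lt_trans hlam0 hlt
    have hν1 : 1 ≤ μ / lam := (one_le_div hlam0).mpr hlt.le
    rw [memS2 μ h0, memA μ h0]
    exact not_congr (bridge2 _ hν1).symm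
  constructor
  · ext μ
    simp only [Set.mem_iUnion]
    constructor
    · intro hμ
      have h0 : 0 < μ := hμ.1
      have hlt := hS1ub μ hμ
      have hspecμ := (hkey1 μ h0 hlt).mp hμ
      rw [hspec] at hspecμ
      obtain ⟨i, hi⟩ := Set.mem_iUnion.mp hspecμ
      refine ⟨i, ?_, hi⟩
      by_contra hge
      push_neg at hge
      have hilt : (i:ℕ) < ℓ := i.isLt
      have hieq : (i:ℕ) = ℓ - 1 := by omega
      have hi_eq : i = ⟨ℓ-1, by omega⟩ := Fin.ext hieq
      have hale : a i ≤ μ := hi.1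
      rw [hi_eq] at hale
      have := hlam.2
      linarith
    · rintro ⟨i, hilt, hi⟩
      have h0 : 0 < μ := lt_of_lt_of_le (hpos i) hi.1
      have hile : (i:ℕ) ≤ ℓ - 2 := by omega
      have hle : μ ≤ b ⟨ℓ-2, by omega⟩ := le_trans hi.2 (hb_le i hile)
      have hlt : μ < lam := lt_of_le_of_lt hle hlam.1
      refine (hkey1 μ h0 hlt).mpr ?_
      rw [hspec]
      exact Set.mem_iUnion.mpr ⟨i, hi⟩
  · ext μ
    constructor
    · intro hμ
      have hlt := hS2lb μ hμ
      have h0 : 0 < μ := lt_trans hlam0 hlt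
      have hspecμ := (hkey2 μ hlt).mp hμ
      rw [hspec] at hspecμ
      obtain ⟨i, hi⟩ := Set.mem_iUnion.mp hspecμ
      have hilt : (i:ℕ) < ℓ := i.isLt
      have hieq : (i:ℕ) = ℓ - 1 := by
        by_contra hne
        have hile : (i:ℕ) ≤ ℓ - 2 := by omega
        have h1 := le_trans hi.2 (hb_le i hile)
        have := hlam.1
        linarith
      have hi_eq : i = ⟨ℓ-1, by omega⟩ := Fin.ext hieq
      rwa [hi_eq] at hi
    · intro hi
      have hlt : lam < μ := lt_of_lt_of_le hlam.2 hi.1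
      exact (hkey2 μ hlt).mpr (by rw [hspec]; exact Set.mem_iUnion.mpr ⟨⟨ℓ-1, by omega⟩, hi⟩)
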